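/- Let R = ⊕_{n∈ℕ} R_n be an ℕ-graded ring whose underlying additive group is torsion-free over ℤ. Then the kernel of the universal derivation d : R → Ω_{R/R_0} equals R_0. Consequently, if Ω_{R/R_0} = 0 then R = R_0, and R is reduced whenever R_0 is reduced. -/

import Mathlib

section Euler

variable (R : Type) [CommRing R] (𝒜 : ℕ → AddSubgroup R) [GradedRing 𝒜]

/-- Euler map `x ↦ ∑ n • xₙ` as an additive monoid hom. -/
noncomputable def eulerHom : R →+ R :=
  (DirectSum.toAddMonoid fun n => n • (𝒜 n).subtype).comp
    (DirectSum.decomposeAddEquiv 𝒜).toAddMonoidHom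

lemma eulerHom_coe {i : ℕ} (x : 𝒜 i) : eulerHom R 𝒜 (x : R) = i • (x : R) := by
  simp [eulerHom, DirectSum.decompose_coe, DirectSum.toAddMonoid_of]

lemma eulerHom_leibniz (a b : R) :
    eulerHom R 𝒜 (a * b) = a * eulerHom R 𝒜 b + b * eulerHom R 𝒜 a := by
  induction a using DirectSum.Decomposition.inductionOn 𝒜 with
  | zero => simp
  | homogeneous a =>
    induction b using DirectSum.Decomposition.inductionOn 𝒜 with
    | zero => simp
    | homogeneous b =>
      rename_i i j
      have hm : (a : R) * (b : R) ∈ 𝒜 (i + j) := SetLike.mul_mem_graded a.2 b.2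
      have := eulerHom_coe R 𝒜 (⟨(a : R) * b, hm⟩ : 𝒜 (i + j))
      simp only at this
      rw [this, eulerHom_coe, eulerHom_coe, add_smul]
      ring_nf
    | add x y hx hy =>
      rw [mul_add, map_add, hx, hy, map_add]
      ring
  | add x y hx hy =>
    rw [add_mul, map_add, hx, hy, map_add]
    ring

end Euler
section Euler2
variable (R : Type) [CommRing R] (𝒜 : ℕ → AddSubgroup R) [GradedRing 𝒜]

lemma eulerHom_of_mem_zero {c : R} (hc : c ∈ 𝒜 0) : eulerHom R 𝒜 c = 0 := by
  simpa using eulerHom_coe R 𝒜 (⟨c, hc⟩ : 𝒜 0)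

/-- Euler derivation. -/
noncomputable def eulerDer : Derivation (SetLike.GradeZero.subring 𝒜) R R where
  toFun := eulerHom R 𝒜
  map_add' := map_add _
  map_smul' := by
    intro c x
    have h1 : c • x = (c : R) * x := rfl
    have h2 : c • (eulerHom R 𝒜 x) = (c : R) * (eulerHom R 𝒜 x) := rfl
    simp only [h1, h2, RingHom.id_apply]
    rw [eulerHom_leibniz, eulerHom_of_mem_zero R 𝒜 c.2, mul_zero, add_zero]
  map_one_eq_zero' := eulerHom_of_mem_zero R 𝒜 (SetLike.GradedOne.one_mem)
  leibniz' := by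
    intro a b
    simpa [smul_eq_mul] using eulerHom_leibniz R 𝒜 a b

lemma decompose_eulerHom (x : R) (n : ℕ) :
    (DirectSum.decompose 𝒜 (eulerHom R 𝒜 x) n : R) = n • (DirectSum.decompose 𝒜 x n : R) := by
  induction x using DirectSum.Decomposition.inductionOn 𝒜 with
  | zero => simp
  | homogeneous a =>
    rename_i i
    rw [eulerHom_coe]
    have h0 : (i • (a : R)) = ((i • a : 𝒜 i) : R) := rfl
    rw [h0, DirectSum.decompose_coe, DirectSum.decompose_coe]
    by_cases h : i = n
    · subst h
      rw [DirectSum.of_eq_same, DirectSum.of_eq_same]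
      rfl
    · rw [DirectSum.of_eq_of_ne _ _ _ (Ne.symm h), DirectSum.of_eq_of_ne _ _ _ (Ne.symm h)]
      simp
  | add x y hx hy =>
    rw [map_add, DirectSum.decompose_add, DirectSum.decompose_add,
      DirectSum.add_apply, DirectSum.add_apply, AddSubgroup.coe_add,
      AddSubgroup.coe_add, hx, hy, smul_add]

end Euler2


/-- Remark 3.12: if `R` is an `ℕ`-graded ring whose additive group is
`ℤ`-torsion-free, then the kernel of the universal derivation
`d : R → Ω_{R/R₀}` equals `R₀`; consequently `Ω_{R/R₀} = 0` forces
`R = R₀`, and then `R` is reduced whenever `R₀` is reduced. -/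
theorem stmt19 (R : Type) [CommRing R] (𝒜 : ℕ → AddSubgroup R) [GradedRing 𝒜]
    (htf : ∀ (n : ℕ) (r : R), 0 < n → n • r = 0 → r = 0) :
    (∀ x : R,
      KaehlerDifferential.D (SetLike.GradeZero.subring 𝒜) R x = 0 ↔ x ∈ 𝒜 0) ∧
    (Subsingleton (KaehlerDifferential (SetLike.GradeZero.subring 𝒜) R) →
      (∀ x : R, x ∈ 𝒜 0)) ∧
    (Subsingleton (KaehlerDifferential (SetLike.GradeZero.subring 𝒜) R) →
      IsReduced (SetLike.GradeZero.subring 𝒜) → IsReduced R) := by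
  have key : ∀ x : R, KaehlerDifferential.D (SetLike.GradeZero.subring 𝒜) R x = 0 → x ∈ 𝒜 0 := by
    intro x hx
    have hE : eulerDer R 𝒜 x = 0 := by
      rw [← Derivation.liftKaehlerDifferential_comp_D (eulerDer R 𝒜) x, hx, map_zero]
    have hE' : eulerHom R 𝒜 x = 0 := hE
    -- all positive components vanish
    have hcomp : ∀ n : ℕ, 0 < n → (DirectSum.decompose 𝒜 x n : R) = 0 := by
      intro n hn
      apply htf n _ hn
      rw [← decompose_eulerHom, hE', DirectSum.decompose_zero]
      simp
    -- hence x lies in 𝒜 0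
    classical
    have := DirectSum.sum_support_decompose 𝒜 x
    rw [← this]
    apply AddSubgroup.sum_mem
    intro i hi
    rcases Nat.eq_zero_or_pos i with h | h
    · subst h; exact (DirectSum.decompose 𝒜 x 0).2
    · rw [hcomp i h]; exact zero_mem _
  have fwd : ∀ x : R, KaehlerDifferential.D (SetLike.GradeZero.subring 𝒜) R x = 0 ↔ x ∈ 𝒜 0 := by
    intro x
    refine ⟨key x, fun hx => ?_⟩
    have : x = algebraMap (SetLike.GradeZero.subring 𝒜) R ⟨x, hx⟩ := rfl
    rw [this, Derivation.map_algebraMap]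
  refine ⟨fwd, ?_, ?_⟩
  · intro hs x
    exact (fwd x).1 (Subsingleton.elim _ _)
  · intro hs hred
    constructor
    intro x hx
    obtain ⟨n, hn⟩ := hx
    have hx0 : x ∈ 𝒜 0 := (fwd x).1 (Subsingleton.elim _ _)
    have hnil : IsNilpotent (⟨x, hx0⟩ : SetLike.GradeZero.subring 𝒜) := by
      refine ⟨n, ?_⟩
      ext
      push_cast
      exact hn
    have := hnil.eq_zero
    exact congrArg Subtype.val this
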